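/- Strictly decreasing colors along alternating reliable extensions: if v and vz are both u-reliable with v a proper prefix of vz, and u·v^ω ∈ L iff u·(vz)^ω ∉ L, then col_u(v) > col_u(vz). -/

import Mathlib

open scoped Classical

/-- Concatenation of a finite word with an infinite word. -/
def wcat {A : Type} (u : List A) (w : ℕ → A) : ℕ → A :=
  fun n => if h : n < u.length then u.get ⟨n, h⟩ else w (n - u.length)

/-- The infinite periodic word `v^ω`. -/
def wpow {A : Type} [Inhabited A] (v : List A) : ℕ → A :=
  fun n => v.getD (n % v.length) default

/-- The ultimately periodic word `u · v^ω`. -/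
def upw {A : Type} [Inhabited A] (u v : List A) : ℕ → A := wcat u (wpow v)

/-- The finite word `v^i`. -/
def wrep {A : Type} (v : List A) (i : ℕ) : List A := (List.replicate i v).flatten

/-- The right congruence `x ∼_L y`. -/
def simL {A : Type} (L : Set (ℕ → A)) (x y : List A) : Prop :=
  ∀ w : ℕ → A, wcat x w ∈ L ↔ wcat y w ∈ L

/-- `w` is `u`-invariant: `u ∼_L u·w`. -/
def UInv {A : Type} (L : Set (ℕ → A)) (u w : List A) : Prop := simL L u (u ++ w)

/-- `v` is relevant to `u`. -/
def URel {A : Type} (L : Set (ℕ → A)) (u v : List A) : Prop :=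
  ∃ z : List A, UInv L u (v ++ z)

/-- `v` has natural color at most `c` wrt `u`. -/
def ColorAtMost {A : Type} [Inhabited A] (L : Set (ℕ → A)) (u : List A) :
    ℕ → List A → Prop
  | c, v => ∀ z : List A, UInv L u (v ++ z) →
      ((upw u (v ++ z) ∈ L ↔ Even c) ∨
        ∃ i : ℕ, 0 < i ∧ ∃ c' : Fin c, ColorAtMost L u c' (wrep (v ++ z) i))
  termination_by c => c
  decreasing_by exact c'.isLt

/-- The natural color of the finite word `v` wrt `u`: `⊥` (i.e. `-∞`) if `v` is
irrelevant to `u`, and otherwise the minimal `c ≥ 0` as in the paper. -/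
noncomputable def ncol {A : Type} [Inhabited A] (L : Set (ℕ → A)) (u v : List A) :
    WithBot ℕ :=
  if URel L u v then ((sInf {c : ℕ | ColorAtMost L u c v} : ℕ) : WithBot ℕ) else ⊥

/-- `v` is stable wrt `u`. -/
def Stable {A : Type} [Inhabited A] (L : Set (ℕ → A)) (u v : List A) : Prop :=
  ∀ i : ℕ, 0 < i → ncol L u v = ncol L u (wrep v i)

/-- `v` is `u`-reliable. -/
def UReliable {A : Type} [Inhabited A] (L : Set (ℕ → A)) (u v : List A) : Prop :=
  UInv L u v ∧ Stable L u v

/-- The natural color of an ultimately periodic infinite word. -/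
noncomputable def icol {A : Type} [Inhabited A] (L : Set (ℕ → A)) (w : ℕ → A) : ℕ :=
  sInf {c : ℕ | ∃ u v : List A, v ≠ [] ∧ w = upw u v ∧ UInv L u v ∧
    ncol L u v = (c : WithBot ℕ)}

/-- The set of states visited infinitely often by a run. -/
def infSet {Q : Type} (r : ℕ → Q) : Set Q := {q | ∀ n : ℕ, ∃ m : ℕ, n ≤ m ∧ r m = q}

/-- The run of a complete deterministic automaton on an infinite word. -/
def runOf {A Q : Type} (δ : Q → A → Q) (q0 : Q) (w : ℕ → A) : ℕ → Q
  | 0 => q0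
  | n + 1 => δ (runOf δ q0 w n) (w n)

/-- `L` is ω-regular: recognized by some deterministic Muller automaton. -/
def OmegaRegular {A : Type} (L : Set (ℕ → A)) : Prop :=
  ∃ (Q : Type) (_ : Fintype Q) (q0 : Q) (δ : Q → A → Q) (α : Set (Set Q)),
    ∀ w : ℕ → A, w ∈ L ↔ infSet (runOf δ q0 w) ∈ α


/-- `x` is a proper prefix of `y`. -/
def PPrefix {A : Type} (x y : List A) : Prop := x <+: y ∧ x ≠ y


set_option linter.unusedSectionVars false

section words
variable {A : Type}

theorem wcat_append (x y : List A) (w : ℕ → A) : wcat (x ++ y) w = wcat x (wcat y w) := by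
  funext n
  simp only [wcat, List.length_append]
  by_cases h1 : n < x.length
  · rw [dif_pos (by omega), dif_pos h1]
    simp only [List.get_eq_getElem]
    exact List.getElem_append_left h1
  · rw [dif_neg h1]
    by_cases h2 : n < x.length + y.length
    · rw [dif_pos h2, dif_pos (by omega)]
      simp only [List.get_eq_getElem]
      exact List.getElem_append_right (le_of_not_gt h1)
    · rw [dif_neg h2, dif_neg (by omega)]
      congr 1; omega

theorem getD_append_lt (x y : List A) (n : ℕ) (h : n < x.length) (d : A) :
    (x ++ y).getD n d = x.getD n d := by
  rw [List.getD_eq_getElem _ _ (by simp; omega), List.getD_eq_getElem _ _ h]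
  exact List.getElem_append_left h

theorem getD_append_ge (x y : List A) (n : ℕ) (h : x.length ≤ n) (d : A) :
    (x ++ y).getD n d = y.getD (n - x.length) d := by
  by_cases h2 : n < x.length + y.length
  · rw [List.getD_eq_getElem _ _ (by simp; omega), List.getD_eq_getElem _ _ (by omega)]
    exact List.getElem_append_right h
  · rw [List.getD_eq_default _ _ (by simp; omega), List.getD_eq_default _ _ (by omega)]

variable [Inhabited A]

theorem wpow_rotate (x y : List A) : wpow (x ++ y) = wcat x (wpow (y ++ x)) := by
  funext n
  simp only [wpow, wcat, List.length_append]
  by_cases h1 : n < x.length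
  · rw [dif_pos h1]
    rw [Nat.mod_eq_of_lt (by omega)]
    rw [getD_append_lt _ _ _ h1]
    exact (List.getD_eq_getElem _ _ h1).trans (by simp)
  · rw [dif_neg h1]
    rcases Nat.eq_zero_or_pos (x.length + y.length) with h0 | hpos
    · have hx : x = [] := List.length_eq_zero_iff.mp (by omega)
      have hy : y = [] := List.length_eq_zero_iff.mp (by omega)
      subst hx; subst hy; simp
    · rw [Nat.add_comm y.length x.length]
      set p := x.length
      set q := y.length
      set l := p + q
      set m := (n - p) % l with hm
      have hmlt : m < l := Nat.mod_lt _ hpos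
      have key : n % l = (m + p) % l := by
        conv_lhs => rw [show n = (n - p) + p by omega]
        rw [Nat.add_mod, hm]
        conv_rhs => rw [Nat.add_mod]
        rw [Nat.mod_mod_of_dvd _ dvd_rfl]
      rw [key]
      by_cases hmq : m < q
      · rw [Nat.mod_eq_of_lt (by omega)]
        rw [getD_append_ge _ _ _ (by omega), getD_append_lt _ _ _ (by omega)]
        congr 1; omega
      · have : (m + p) % l = m - q := by
          rw [Nat.mod_eq_sub_mod (by omega), Nat.mod_eq_of_lt (by omega)]
          omega
        rw [this, getD_append_lt _ _ _ (by omega), getD_append_ge _ _ _ (by omega)]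

theorem wpow_self (x : List A) : wpow x = wcat x (wpow x) := by
  have := wpow_rotate x ([] : List A)
  simpa using this
end words

section wreps
variable {A : Type}

theorem wrep_succ (v : List A) (k : ℕ) : wrep v (k+1) = v ++ wrep v k := by
  simp [wrep, List.replicate_succ]

theorem wrep_one (v : List A) : wrep v 1 = v := by simp [wrep]

theorem wrep_add (v : List A) (a b : ℕ) : wrep v (a+b) = wrep v a ++ wrep v b := by
  induction a with
  | zero => simp [wrep]
  | succ a ih => rw [Nat.succ_add, wrep_succ, ih, wrep_succ, List.append_assoc]

theorem length_wrep (v : List A) (k : ℕ) : (wrep v k).length = k * v.length := by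
  induction k with
  | zero => simp [wrep]
  | succ k ih => rw [wrep_succ]; simp [ih]; ring

theorem wrep_ne_nil (v : List A) (k : ℕ) (hv : v ≠ []) (hk : 0 < k) : wrep v k ≠ [] := by
  have : (wrep v k).length ≠ 0 := by
    rw [length_wrep]
    have : v.length ≠ 0 := fun h => hv (List.length_eq_zero_iff.mp h)
    positivity
  exact fun h => this (by simp [h])

theorem getD_wrep [Inhabited A] (v : List A) (k m : ℕ) (hm : m < k * v.length) :
    (wrep v k).getD m default = v.getD (m % v.length) default := by
  induction k generalizing m with
  | zero => omega
  | succ k ih =>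
    rw [wrep_succ]
    by_cases h : m < v.length
    · rw [getD_append_lt _ _ _ h, Nat.mod_eq_of_lt h]
    · have hs : (k+1) * v.length = k * v.length + v.length := Nat.succ_mul k v.length
      rw [getD_append_ge _ _ _ (by omega), ih _ (by omega)]
      rw [← Nat.mod_eq_sub_mod (by omega)]

theorem wpow_wrep [Inhabited A] (v : List A) (k : ℕ) (hk : 0 < k) :
    wpow (wrep v k) = wpow v := by
  rcases eq_or_ne v [] with rfl | hv
  · have : wrep ([] : List A) k = [] := by simp [wrep]
    rw [this]
  · funext n
    have hl : 0 < v.length := List.length_pos_iff.mpr hv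
    simp only [wpow, length_wrep]
    have hkl : 0 < k * v.length := by positivity
    rw [getD_wrep _ _ _ (Nat.mod_lt _ hkl)]
    congr 1
    rw [Nat.mod_mod_of_dvd _ (dvd_mul_left v.length k)]

theorem upw_wrep [Inhabited A] (u v : List A) (k : ℕ) (hk : 0 < k) :
    upw u (wrep v k) = upw u v := by
  rw [upw, upw, wpow_wrep _ _ hk]

theorem uinv_append {L : Set (ℕ → A)} {u x y : List A} (hx : UInv L u x) (hy : UInv L u y) :
    UInv L u (x ++ y) := by
  intro w
  calc wcat u w ∈ L ↔ wcat (u ++ y) w ∈ L := hy w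
    _ ↔ wcat (u ++ x) (wcat y w) ∈ L := by rw [wcat_append u y w]; exact hx (wcat y w)
    _ ↔ wcat (u ++ (x ++ y)) w ∈ L := by rw [← List.append_assoc, wcat_append (u ++ x) y w]

theorem uinv_wrep {L : Set (ℕ → A)} {u x : List A} (hx : UInv L u x) (k : ℕ) (hk : 0 < k) :
    UInv L u (wrep x k) := by
  induction k with
  | zero => omega
  | succ k ih =>
    rcases Nat.eq_zero_or_pos k with rfl | hk'
    · rw [wrep_one]; exact hx
    · rw [wrep_succ]; exact uinv_append hx (ih hk')

/-- the semantic swap lemma -/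
theorem upw_swap [Inhabited A] {L : Set (ℕ → A)} {u a : List A} (ha : UInv L u a) (b : List A) :
    upw u (a ++ b) ∈ L ↔ upw u (b ++ a) ∈ L := by
  have h1 : upw u (a ++ b) = wcat (u ++ a) (wpow (b ++ a)) := by
    rw [upw, wpow_rotate a b, ← wcat_append]
  rw [h1, show upw u (b ++ a) = wcat u (wpow (b ++ a)) from rfl]
  exact (ha (wpow (b ++ a))).symm
end wreps

section automaton
variable {A Q : Type} (δ : Q → A → Q)

def dstar (q : Q) (w : List A) : Q := w.foldl δ q

theorem dstar_append (q : Q) (x y : List A) : dstar δ q (x ++ y) = dstar δ (dstar δ q x) y :=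
  List.foldl_append ..

theorem dstar_take_succ (q : Q) (x : List A) (m : ℕ) (h : m < x.length) :
    dstar δ q (x.take (m+1)) = δ (dstar δ q (x.take m)) (x.get ⟨m, h⟩) := by
  show List.foldl δ q (x.take (m+1)) = _
  rw [← List.take_concat_get h, List.concat_eq_append, List.foldl_append]
  rfl

theorem run_wcat_take (q : Q) (x : List A) (w : ℕ → A) (m : ℕ) (h : m ≤ x.length) :
    runOf δ q (wcat x w) m = dstar δ q (x.take m) := by
  induction m with
  | zero => simp [runOf, dstar]
  | succ m ih =>
    rw [runOf, ih (by omega), dstar_take_succ δ q x m (by omega)]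
    congr 1
    simp [wcat, dif_pos (show m < x.length by omega)]

theorem run_wcat_shift (q : Q) (x : List A) (w : ℕ → A) (n : ℕ) :
    runOf δ q (wcat x w) (x.length + n) = runOf δ (dstar δ q x) w n := by
  induction n with
  | zero => simpa [runOf] using run_wcat_take δ q x w x.length le_rfl
  | succ n ih =>
    rw [show x.length + (n+1) = (x.length + n) + 1 by omega, runOf, ih, runOf]
    congr 1
    simp only [wcat]
    rw [dif_neg (by omega)]
    congr 1; omega

theorem infSet_wcat (q : Q) (x : List A) (w : ℕ → A) :
    infSet (runOf δ q (wcat x w)) = infSet (runOf δ (dstar δ q x) w) := by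
  ext p
  constructor
  · intro hp n
    obtain ⟨m, hm, hrm⟩ := hp (x.length + n)
    refine ⟨m - x.length, by omega, ?_⟩
    rw [← run_wcat_shift δ q x w (m - x.length), show x.length + (m - x.length) = m by omega, hrm]
  · intro hp n
    obtain ⟨m, hm, hrm⟩ := hp n
    exact ⟨x.length + m, by omega, by rw [run_wcat_shift, hrm]⟩

def Vis (q : Q) (w : List A) : Set Q := {p | ∃ r < w.length, dstar δ q (w.take r) = p}

theorem run_loop [Inhabited A] (q : Q) (v : List A) (hv : v ≠ []) (hq : dstar δ q v = q) (n : ℕ) :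
    runOf δ q (wpow v) n = dstar δ q (v.take (n % v.length)) := by
  have hl : 0 < v.length := List.length_pos_iff.mpr hv
  induction n with
  | zero => simp [runOf, dstar]
  | succ n ih =>
    rw [runOf, ih]
    set s := n % v.length with hs
    have hslt : s < v.length := Nat.mod_lt _ hl
    have hw : wpow v n = v.get ⟨s, hslt⟩ := by
      show v.getD (n % v.length) default = _
      rw [← hs, List.getD_eq_getElem _ _ hslt]
      simp
    rw [hw, ← dstar_take_succ δ q v s hslt]
    have : (n + 1) % v.length = (s + 1) % v.length := by
      conv_lhs => rw [show n = v.length * (n / v.length) + s by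
        rw [hs]; exact (Nat.div_add_mod n v.length).symm]
      rw [Nat.add_assoc, Nat.mul_add_mod]
    rw [this]
    by_cases hcase : s + 1 < v.length
    · rw [Nat.mod_eq_of_lt hcase]
    · have hseq : s + 1 = v.length := by omega
      rw [hseq, Nat.mod_self, List.take_length, List.take_zero]
      simpa [dstar] using hq

theorem infSet_loop [Inhabited A] (q : Q) (v : List A) (hv : v ≠ []) (hq : dstar δ q v = q) :
    infSet (runOf δ q (wpow v)) = Vis δ q v := by
  have hl : 0 < v.length := List.length_pos_iff.mpr hv
  ext p
  constructor
  · intro hp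
    obtain ⟨m, _, hrm⟩ := hp 0
    rw [run_loop δ q v hv hq] at hrm
    exact ⟨m % v.length, Nat.mod_lt _ hl, hrm⟩
  · rintro ⟨r, hr, hdr⟩ n
    refine ⟨n * v.length + r, by nlinarith, ?_⟩
    rw [run_loop δ q v hv hq, Nat.mul_comm, Nat.mul_add_mod, Nat.mod_eq_of_lt hr, hdr]

theorem Vis_append (q : Q) (x y : List A) :
    Vis δ q (x ++ y) = Vis δ q x ∪ Vis δ (dstar δ q x) y := by
  ext p
  simp only [Vis, Set.mem_union, Set.mem_setOf_eq, List.length_append]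
  constructor
  · rintro ⟨r, hr, hdr⟩
    by_cases h : r < x.length
    · left
      refine ⟨r, h, ?_⟩
      rwa [List.take_append_of_le_length (by omega)] at hdr
    · right
      refine ⟨r - x.length, by omega, ?_⟩
      rw [List.take_append, List.take_of_length_le (by omega), dstar_append] at hdr
      exact hdr
  · rintro (⟨r, hr, hdr⟩ | ⟨r, hr, hdr⟩)
    · refine ⟨r, by omega, ?_⟩
      rwa [List.take_append_of_le_length (by omega)]
    · refine ⟨x.length + r, by omega, ?_⟩
      rw [List.take_append, List.take_of_length_le (by omega), dstar_append]
      have harith : x.length + r - x.length = r := by omega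
      rwa [harith]
end automaton

section profiles
variable {A Q : Type} (δ : Q → A → Q)

/-- transition profile monoid carrier -/
abbrev ProfM (Q : Type) := (Q → Q) × (Q → Set Q)

def mulM {Q : Type} (a b : ProfM Q) : ProfM Q :=
  (fun q => b.1 (a.1 q), fun q => a.2 q ∪ b.2 (a.1 q))

theorem mulM_assoc {Q : Type} (a b c : ProfM Q) : mulM (mulM a b) c = mulM a (mulM b c) := by
  unfold mulM
  refine Prod.ext rfl ?_
  funext q
  simp [Set.union_assoc]

def prof (w : List A) : ProfM Q := (fun q => dstar δ q w, fun q => Vis δ q w)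

theorem prof_append (x y : List A) : prof δ (x ++ y) = mulM (prof δ x) (prof δ y) := by
  unfold prof mulM
  refine Prod.ext ?_ ?_
  · funext q; exact dstar_append δ q x y
  · funext q; exact Vis_append δ q x y

theorem prof_wrep_add (v : List A) (a b : ℕ) :
    prof δ (wrep v (a + b)) = mulM (prof δ (wrep v a)) (prof δ (wrep v b)) := by
  rw [wrep_add, prof_append]

def IsIdem {Q : Type} (e : ProfM Q) : Prop := mulM e e = e

/-- every word has an idempotent power profile -/
theorem exists_idem_pow [Fintype Q] (v : List A) :
    ∃ k : ℕ, 0 < k ∧ IsIdem (prof δ (wrep v k)) := by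
  have hfin : Finite (ProfM Q) := by infer_instance
  obtain ⟨i, j, hne, heq⟩ := Finite.exists_ne_map_eq_of_infinite
    (fun n : ℕ => prof δ (wrep v (n + 1)))
  wlog hij : i < j generalizing i j
  · exact this j i hne.symm heq.symm (by omega)
  set i0 := i + 1 with hi0
  set p := j - i with hp
  have hp1 : 0 < p := by omega
  have hbase : prof δ (wrep v (i0 + p)) = prof δ (wrep v i0) := by
    rw [hi0, hp, show i + 1 + (j - i) = j + 1 by omega]
    exact heq.symm
  have hstep : ∀ s, i0 ≤ s → prof δ (wrep v (s + p)) = prof δ (wrep v s) := by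
    intro s hs
    rw [show s = i0 + (s - i0) by omega, show i0 + (s - i0) + p = (i0 + p) + (s - i0) by omega,
      prof_wrep_add δ v (i0 + p) (s - i0), hbase, ← prof_wrep_add]
  have hiter : ∀ t s, i0 ≤ s → prof δ (wrep v (s + t * p)) = prof δ (wrep v s) := by
    intro t
    induction t with
    | zero => intro s _; simp
    | succ t ih =>
      intro s hs
      rw [show s + (t + 1) * p = (s + t * p) + p by ring, hstep _ (by omega), ih s hs]
  refine ⟨i0 * p, by positivity, ?_⟩
  unfold IsIdem
  rw [← prof_wrep_add, show i0 * p + i0 * p = i0 * p + i0 * p by rfl]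
  exact hiter i0 (i0 * p) (by nlinarith)

variable [Inhabited A]

/-- membership for idempotent-profile loops -/
theorem mem_upw_iff_acc {L : Set (ℕ → A)} {q0 : Q} {α : Set (Set Q)}
    (hL : ∀ w : ℕ → A, w ∈ L ↔ infSet (runOf δ q0 w) ∈ α)
    (u w : List A) (hw : w ≠ []) (hidem : IsIdem (prof δ w)) :
    (upw u w ∈ L ↔ (prof δ w).2 ((prof δ w).1 (dstar δ q0 u)) ∈ α) := by
  set qu := dstar δ q0 u with hqu
  set q1 := dstar δ qu w with hq1
  have hfix : dstar δ q1 w = q1 := by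
    have := congrArg (fun e => e.1 qu) hidem
    simpa [mulM, prof, hq1] using this
  rw [hL]
  rw [show upw u w = wcat u (wpow w) from rfl, infSet_wcat, ← hqu]
  rw [wpow_self w, infSet_wcat, ← hq1]
  rw [infSet_loop δ q1 w hw hfix]
  rfl
end profiles

theorem ColorAtMost_iff {A : Type} [Inhabited A] (L : Set (ℕ → A)) (u : List A) (c : ℕ) (v : List A) :
    ColorAtMost L u c v ↔ ∀ z : List A, UInv L u (v ++ z) →
      ((upw u (v ++ z) ∈ L ↔ Even c) ∨
        ∃ i : ℕ, 0 < i ∧ ∃ c' : Fin c, ColorAtMost L u c' (wrep (v ++ z) i)) := by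
  rw [ColorAtMost]


section core
variable {A Q : Type} [Inhabited A] [Fintype Q]

def AccP (α : Set (Set Q)) (qu : Q) (e : ProfM Q) : Prop := e.2 (e.1 qu) ∈ α

def Realiz (L : Set (ℕ → A)) (δ : Q → A → Q) (u : List A) (e : ProfM Q) : Prop :=
  ∃ w : List A, w ≠ [] ∧ UInv L u w ∧ prof δ w = e

def Rrel (L : Set (ℕ → A)) (δ : Q → A → Q) (α : Set (Set Q)) (qu : Q) (u : List A)
    (e e' : ProfM Q) : Prop :=
  IsIdem e ∧ IsIdem e' ∧ Realiz L δ u e' ∧ mulM e e' = e' ∧ ¬(AccP α qu e' ↔ AccP α qu e)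

theorem tg_head {X : Type} {r : X → X → Prop} {a b : X} (h : Relation.TransGen r a b) :
    r a b ∨ ∃ c, r a c ∧ Relation.TransGen r c b := by
  induction h with
  | single h => exact Or.inl h
  | tail h1 h2 ih =>
    rcases ih with h | ⟨c, hc, htc⟩
    · exact Or.inr ⟨_, h, Relation.TransGen.single h2⟩
    · exact Or.inr ⟨c, hc, htc.tail h2⟩

theorem absorb {L : Set (ℕ → A)} {δ : Q → A → Q} {α : Set (Set Q)} {qu : Q} {u : List A}
    {e e' : ProfM Q} (h : Relation.TransGen (Rrel L δ α qu u) e e') : mulM e e' = e' := by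
  induction h with
  | single h => exact h.2.2.2.1
  | tail h1 h2 ih =>
    rw [← h2.2.2.2.1, ← mulM_assoc, ih]

theorem semantic {L : Set (ℕ → A)} {δ : Q → A → Q} {q0 : Q} {α : Set (Set Q)} {u : List A}
    (hL : ∀ w : ℕ → A, w ∈ L ↔ infSet (runOf δ q0 w) ∈ α)
    {e e' : ProfM Q} (he : IsIdem e) (he' : IsIdem e')
    (hre : Realiz L δ u e) (hre' : Realiz L δ u e')
    (h1 : mulM e e' = e') (h2 : mulM e' e = e) :
    (AccP α (dstar δ q0 u) e ↔ AccP α (dstar δ q0 u) e') := by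
  obtain ⟨we, hwe, hinve, hpe⟩ := hre
  obtain ⟨wa, hwa, hinva, hpa⟩ := hre'
  have hp1 : prof δ (we ++ wa) = e' := by rw [prof_append, hpe, hpa, h1]
  have hp2 : prof δ (wa ++ we) = e := by rw [prof_append, hpe, hpa, h2]
  have m1 : upw u (we ++ wa) ∈ L ↔ AccP α (dstar δ q0 u) e' := by
    have := mem_upw_iff_acc δ hL u (we ++ wa)
      (by simp [hwe]) (by rw [hp1]; exact he')
    rwa [hp1] at this
  have m2 : upw u (wa ++ we) ∈ L ↔ AccP α (dstar δ q0 u) e := by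
    have := mem_upw_iff_acc δ hL u (wa ++ we)
      (by simp [hwa]) (by rw [hp2]; exact he)
    rwa [hp2] at this
  rw [← m1, ← m2]
  exact (upw_swap hinve wa).symm

theorem no_cycle {L : Set (ℕ → A)} {δ : Q → A → Q} {q0 : Q} {α : Set (Set Q)} {u : List A}
    (hL : ∀ w : ℕ → A, w ∈ L ↔ infSet (runOf δ q0 w) ∈ α)
    {e : ProfM Q} (hre : Realiz L δ u e) (hidem : IsIdem e) :
    ¬ Relation.TransGen (Rrel L δ α (dstar δ q0 u) u) e e := by
  intro h
  rcases tg_head h with h1 | ⟨a, ha, hae⟩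
  · exact h1.2.2.2.2 Iff.rfl
  · have h2 : mulM a e = e := absorb hae
    have h1 : mulM e a = a := ha.2.2.2.1
    exact ha.2.2.2.2 ((semantic hL hidem ha.2.1 hre ha.2.2.1 h1 h2).symm)

noncomputable def rnk (L : Set (ℕ → A)) (δ : Q → A → Q) (α : Set (Set Q)) (qu : Q)
    (u : List A) (e : ProfM Q) : ℕ :=
  {e' : ProfM Q | Relation.TransGen (Rrel L δ α qu u) e e'}.ncard

theorem rnk_lt {L : Set (ℕ → A)} {δ : Q → A → Q} {q0 : Q} {α : Set (Set Q)} {u : List A}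
    (hL : ∀ w : ℕ → A, w ∈ L ↔ infSet (runOf δ q0 w) ∈ α)
    {e e' : ProfM Q} (h : Rrel L δ α (dstar δ q0 u) u e e') :
    rnk L δ α (dstar δ q0 u) u e' < rnk L δ α (dstar δ q0 u) u e := by
  apply Set.ncard_lt_ncard _ (Set.toFinite _)
  constructor
  · intro x hx
    exact (Relation.TransGen.single h).trans hx
  · intro hsub
    have he' : e' ∈ {x : ProfM Q | Relation.TransGen (Rrel L δ α (dstar δ q0 u) u) e x} :=
      Relation.TransGen.single h
    exact no_cycle hL h.2.2.1 h.2.1 (hsub he')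

noncomputable def cOf (L : Set (ℕ → A)) (δ : Q → A → Q) (α : Set (Set Q)) (qu : Q)
    (u : List A) (e : ProfM Q) : ℕ :=
  2 * rnk L δ α qu u e + (if AccP α qu e then 0 else 1)

theorem cOf_parity (L : Set (ℕ → A)) (δ : Q → A → Q) (α : Set (Set Q)) (qu : Q)
    (u : List A) (e : ProfM Q) :
    (Even (cOf L δ α qu u e) ↔ AccP α qu e) := by
  unfold cOf
  by_cases h : AccP α qu e
  · simp [h, Nat.even_mul]
  · simp [h, Nat.even_add_one, Nat.even_mul]
end core

section main
variable {A Q : Type} [Inhabited A] [Fintype Q]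
variable {L : Set (ℕ → A)} {δ : Q → A → Q} {q0 : Q} {α : Set (Set Q)} {u : List A}

theorem absorb_pow {e : ProfM Q} (hidem : IsIdem e) (w z : List A) (hprof : prof δ w = e) :
    ∀ m, 0 < m → mulM e (prof δ (wrep (w ++ z) m)) = prof δ (wrep (w ++ z) m) := by
  have base : mulM e (prof δ (w ++ z)) = prof δ (w ++ z) := by
    rw [prof_append, hprof, ← mulM_assoc, hidem]
  intro m hm
  induction m with
  | zero => omega
  | succ m ih =>
    rcases Nat.eq_zero_or_pos m with rfl | hm'
    · rw [wrep_one]; exact base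
    · rw [wrep_succ, prof_append, ← mulM_assoc, base]

set_option linter.unusedSectionVars false in
theorem main_induction
    (hL : ∀ w : ℕ → A, w ∈ L ↔ infSet (runOf δ q0 w) ∈ α) :
    ∀ (n : ℕ) (e : ProfM Q), IsIdem e → rnk L δ α (dstar δ q0 u) u e ≤ n →
      ∀ w : List A, w ≠ [] → UInv L u w → prof δ w = e →
        ColorAtMost L u (cOf L δ α (dstar δ q0 u) u e) w := by
  intro n
  induction n using Nat.strong_induction_on with
  | _ n ih =>
    intro e hidem hrank w hw hinv hprof
    rw [ColorAtMost_iff]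
    intro z hz
    have hwz : w ++ z ≠ [] := by simp [hw]
    obtain ⟨m, hm, hidem'⟩ := exists_idem_pow δ (w ++ z)
    set e' := prof δ (wrep (w ++ z) m) with he'
    have habs : mulM e e' = e' := absorb_pow hidem w z hprof m hm
    have hreal' : Realiz L δ u e' :=
      ⟨wrep (w ++ z) m, wrep_ne_nil _ _ hwz hm, uinv_wrep hz m hm, rfl⟩
    have hmem : upw u (w ++ z) ∈ L ↔ AccP α (dstar δ q0 u) e' := by
      rw [← upw_wrep u (w ++ z) m hm]
      exact mem_upw_iff_acc δ hL u _ (wrep_ne_nil _ _ hwz hm) hidem'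
    by_cases hAcc : AccP α (dstar δ q0 u) e' ↔ AccP α (dstar δ q0 u) e
    · left
      rw [hmem, hAcc, cOf_parity]
    · right
      have hR : Rrel L δ α (dstar δ q0 u) u e e' := ⟨hidem, hidem', hreal', habs, hAcc⟩
      have hrk : rnk L δ α (dstar δ q0 u) u e' < rnk L δ α (dstar δ q0 u) u e := rnk_lt hL hR
      have hclt : cOf L δ α (dstar δ q0 u) u e' < cOf L δ α (dstar δ q0 u) u e := by
        unfold cOf
        split_ifs <;> omega
      refine ⟨m, hm, ⟨cOf L δ α (dstar δ q0 u) u e', hclt⟩, ?_⟩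
      show ColorAtMost L u (cOf L δ α (dstar δ q0 u) u e') (wrep (w ++ z) m)
      exact ih (rnk L δ α (dstar δ q0 u) u e') (by omega) e' hidem' le_rfl
        (wrep (w ++ z) m) (wrep_ne_nil _ _ hwz hm) (uinv_wrep hz m hm) rfl

set_option linter.unusedSectionVars false in
theorem exists_colorAtMost
    (hL : ∀ w : ℕ → A, w ∈ L ↔ infSet (runOf δ q0 w) ∈ α)
    (w : List A) (hw : w ≠ []) (hinv : UInv L u w) :
    ColorAtMost L u (2 * Nat.card (ProfM Q) + 2) w := by
  rw [ColorAtMost_iff]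
  intro z hz
  right
  have hwz : w ++ z ≠ [] := by simp [hw]
  obtain ⟨m, hm, hidem'⟩ := exists_idem_pow δ (w ++ z)
  set e' := prof δ (wrep (w ++ z) m) with he'
  have hbound : cOf L δ α (dstar δ q0 u) u e' < 2 * Nat.card (ProfM Q) + 2 := by
    have h1 : rnk L δ α (dstar δ q0 u) u e' ≤ Nat.card (ProfM Q) := by
      have := Set.ncard_le_ncard (Set.subset_univ
        {x : ProfM Q | Relation.TransGen (Rrel L δ α (dstar δ q0 u) u) e' x}) Set.finite_univ
      rwa [Set.ncard_univ] at this
    unfold cOf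
    split_ifs <;> omega
  refine ⟨m, hm, ⟨cOf L δ α (dstar δ q0 u) u e', hbound⟩, ?_⟩
  show ColorAtMost L u (cOf L δ α (dstar δ q0 u) u e') (wrep (w ++ z) m)
  exact main_induction hL (rnk L δ α (dstar δ q0 u) u e') e' hidem' le_rfl
    (wrep (w ++ z) m) (wrep_ne_nil _ _ hwz hm) (uinv_wrep hz m hm) rfl
end main

section top
variable {A : Type} [Inhabited A] {L : Set (ℕ → A)} {u : List A}

theorem urel_of_uinv {v : List A} (h : UInv L u v) : URel L u v :=
  ⟨[], by rwa [List.append_nil]⟩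

theorem ncol_eq_sInf {v : List A} (h : UInv L u v) :
    ncol L u v = ((sInf {c : ℕ | ColorAtMost L u c v} : ℕ) : WithBot ℕ) := by
  rw [ncol, if_pos (urel_of_uinv h)]

theorem colorAtMost_mono {c : ℕ} {v z : List A} (hc : ColorAtMost L u c v) :
    ColorAtMost L u c (v ++ z) := by
  rw [ColorAtMost_iff] at hc ⊢
  intro z' hz'
  have h2 := hc (z ++ z') (by rwa [← List.append_assoc])
  rwa [← List.append_assoc] at h2

theorem parity_of_reliable {Q : Type} [Fintype Q] {δ : Q → A → Q} {q0 : Q} {α : Set (Set Q)}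
    (hL : ∀ w : ℕ → A, w ∈ L ↔ infSet (runOf δ q0 w) ∈ α)
    {v : List A} (hv : v ≠ []) (hrel : UReliable L u v) :
    (Even (sInf {c : ℕ | ColorAtMost L u c v}) ↔ upw u v ∈ L) := by
  set S := {c : ℕ | ColorAtMost L u c v} with hS
  have hne : S.Nonempty := ⟨_, exists_colorAtMost hL v hv hrel.1⟩
  have hmem : ColorAtMost L u (sInf S) v := Nat.sInf_mem hne
  rw [ColorAtMost_iff] at hmem
  have h0 := hmem [] (by rw [List.append_nil]; exact hrel.1)
  rcases h0 with h | ⟨i, hi, c', hc'⟩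
  · rw [List.append_nil] at h
    exact h.symm
  · exfalso
    rw [List.append_nil] at hc'
    have hst := hrel.2 i hi
    rw [ncol_eq_sInf hrel.1, ncol_eq_sInf (uinv_wrep hrel.1 i hi)] at hst
    have hst' : sInf S = sInf {c : ℕ | ColorAtMost L u c (wrep v i)} := by
      exact_mod_cast hst
    have hle : sInf {c : ℕ | ColorAtMost L u c (wrep v i)} ≤ (c' : ℕ) :=
      Nat.sInf_le hc'
    have := c'.isLt
    omega

end top

/-- strictly decreasing colors along alternating reliable extensions. -/
theorem color_strictly_decreasing {A : Type} [Inhabited A] (L : Set (ℕ → A))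
    (hreg : OmegaRegular L) (u v z : List A) (hv : v ≠ []) (hz : z ≠ [])
    (h1 : UReliable L u v) (h2 : UReliable L u (v ++ z))
    (halt : upw u v ∈ L ↔ upw u (v ++ z) ∉ L) :
    ncol L u (v ++ z) < ncol L u v := by
  obtain ⟨Q, hfin, q0, δ, α, hL⟩ := hreg
  have hvz : v ++ z ≠ [] := by simp [hv]
  set S1 := {c : ℕ | ColorAtMost L u c v} with hS1
  set S2 := {c : ℕ | ColorAtMost L u c (v ++ z)} with hS2
  have hne1 : S1.Nonempty := ⟨_, exists_colorAtMost hL v hv h1.1⟩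
  have hmono : sInf S2 ≤ sInf S1 :=
    Nat.sInf_le (colorAtMost_mono (Nat.sInf_mem hne1))
  have hp1 := parity_of_reliable hL hv h1
  have hp2 := parity_of_reliable hL hvz h2
  have hne : sInf S2 ≠ sInf S1 := by
    intro h
    rw [← hS1, ← hS2] at *
    rw [h] at hp2
    rw [← hp1] at halt
    rw [← hp2] at halt
    tauto
  rw [ncol_eq_sInf h1.1, ncol_eq_sInf h2.1]
  exact_mod_cast lt_of_le_of_ne hmono hne
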